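/- Let Z be a commutative ring, r ≥ 1 an integer, and let (A', h, π) be a first order deformation of the matrix ring M_r(Z). Then there exist a ring Z', a central element h' ∈ Z', a surjective ring homomorphism π₀ : Z' → Z making (Z', h', π₀) a first order deformation of Z, and a ring isomorphism φ : M_r(Z') → A' such that φ(h'·1) = h and π ∘ φ = M_r(π₀) (the entrywise application of π₀). (The ring Z' need not be commutative.) -/

import Mathlib

universe u v

/-- `(A', h, π)` is a first order deformation of `A`: `h` is a central element of `A'`,
`π : A' → A` is a surjective ring homomorphism with kernel `hA'`, and the annihilator
`{x ∈ A' : h·x = 0}` equals `hA'`. -/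
def IsFirstOrderDeformation {A' A : Type*} [Ring A'] [Ring A] (h : A') (π : A' →+* A) : Prop :=
  (∀ x : A', h * x = x * h) ∧
  Function.Surjective π ∧
  (∀ x : A', π x = 0 ↔ ∃ y : A', x = h * y) ∧
  (∀ x : A', h * x = 0 ↔ ∃ y : A', x = h * y)

section Aux
variable {A' : Type v} [Ring A']

lemma corner_mul_left {e z : A'} (he : e * e = e) (hz : e * z * e = z) : e * z = z := by
  conv_lhs => rw [← hz]
  rw [← mul_assoc, ← mul_assoc, he, hz]

lemma corner_mul_right {e z : A'} (he : e * e = e) (hz : e * z * e = z) : z * e = z := by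
  conv_lhs => rw [← hz]
  rw [mul_assoc, he, hz]

lemma corner_sandwich {e : A'} (he : e * e = e) (a : A') : e * (e * a * e) * e = e * a * e := by
  calc e * (e * a * e) * e = (e * e) * a * (e * e) := by noncomm_ring
  _ = e * a * e := by rw [he]

def cornerSet (e : A') : AddSubgroup A' where
  carrier := {z | e * z * e = z}
  add_mem' := by intro a b ha hb; simp only [Set.mem_setOf_eq] at *; rw [mul_add, add_mul, ha, hb]
  zero_mem' := by simp
  neg_mem' := by intro a ha; simp only [Set.mem_setOf_eq] at *; rw [mul_neg, neg_mul, ha]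

@[reducible] def cornerRing (e : A') (he : e * e = e) : Ring (cornerSet e) :=
  { (inferInstance : AddCommGroup (cornerSet e)) with
    mul := fun a b => ⟨a.1 * b.1, by
      show e * (a.1 * b.1) * e = a.1 * b.1
      rw [← mul_assoc e a.1 b.1, corner_mul_left he a.2, mul_assoc,
        corner_mul_right he b.2]⟩
    one := ⟨e, by show e * e * e = e; rw [he, he]⟩
    mul_assoc := fun a b c => Subtype.ext (mul_assoc a.1 b.1 c.1)
    one_mul := fun a => Subtype.ext (corner_mul_left he a.2)
    mul_one := fun a => Subtype.ext (corner_mul_right he a.2)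
    left_distrib := fun a b c => Subtype.ext (mul_add a.1 b.1 c.1)
    right_distrib := fun a b c => Subtype.ext (add_mul a.1 b.1 c.1)
    zero_mul := fun a => Subtype.ext (zero_mul a.1)
    mul_zero := fun a => Subtype.ext (mul_zero a.1) }

lemma lift_idem {x n : A'} (hco : x * n = n * x) (hn2 : n * n = 0)
    (hx2 : x * x = x + n) :
    (x + n - 2 * (n * x)) * (x + n - 2 * (n * x)) = x + n - 2 * (n * x) := by
  have h1 : n * (n * x) = 0 := by rw [← mul_assoc, hn2, zero_mul]
  have h2 : (n * x) * n = 0 := by rw [mul_assoc, hco, h1]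
  have h4 : x * (n * x) = n * x := by
    rw [← mul_assoc, hco, mul_assoc, hx2, mul_add, hn2, add_zero]
  have h5 : (n * x) * x = n * x := by rw [mul_assoc, hx2, mul_add, hn2, add_zero]
  have h3 : (n * x) * (n * x) = 0 := by rw [mul_assoc n x (n*x), h4, h1]
  rw [two_mul]
  simp only [mul_add, add_mul, mul_sub, sub_mul, h1, h2, h3, h4, h5, hx2, hco, hn2]
  abel

end Aux

/-- Any first order deformation of a matrix ring `M_r(Z)` is, compatibly, a matrix ring
`M_r(Z')` over a first order deformation `Z'` of `Z` (with `Z'` not necessarily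
commutative). -/
theorem matrix_deformation_splits {Z : Type u} [CommRing Z] {A' : Type v} [Ring A']
    (r : ℕ) (hr : 1 ≤ r)
    (h : A') (π : A' →+* Matrix (Fin r) (Fin r) Z)
    (hdef : IsFirstOrderDeformation h π) :
    ∃ (Z' : Type v) (_ : Ring Z') (h' : Z') (π₀ : Z' →+* Z),
      IsFirstOrderDeformation h' π₀ ∧
      ∃ φ : Matrix (Fin r) (Fin r) Z' ≃+* A',
        φ (h' • (1 : Matrix (Fin r) (Fin r) Z')) = h ∧
        ∀ X : Matrix (Fin r) (Fin r) Z', π (φ X) = π₀.mapMatrix X := by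
  obtain ⟨hc, hsurj, hker, hann⟩ := hdef
  set E : Fin r → Fin r → Matrix (Fin r) (Fin r) Z :=
    fun i j => Matrix.single i j 1 with hE
  set i0 : Fin r := ⟨0, hr⟩ with hi0
  have hπh : π h = 0 := (hker h).2 ⟨1, (mul_one h).symm⟩
  have hh : h * h = 0 := (hann h).2 ⟨1, (mul_one h).symm⟩
  have hmove : ∀ a b : A', a * (h * b) = h * (a * b) := fun a b => by
    rw [← mul_assoc, ← hc a, mul_assoc]
  have hI : ∀ a b : A', (h * a) * (h * b) = 0 := fun a b => by
    rw [hmove, ← mul_assoc, ← mul_assoc, hh, zero_mul, zero_mul]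
  have hEmul : ∀ i j k l : Fin r, E i j * E k l = if j = k then E i l else 0 := by
    intro i j k l
    by_cases hjk : j = k
    · subst hjk; simp [hE, Matrix.single_mul_single_same]
    · simp [hE, hjk, Matrix.single_mul_single_of_ne]
  -- build the idempotent e lifting E i0 i0
  obtain ⟨x, hx⟩ := hsurj (E i0 i0)
  have hπn : π (x * x - x) = 0 := by
    rw [map_sub, _root_.map_mul, hx, hEmul]; simp
  obtain ⟨m, hm⟩ := (hker _).1 hπn
  set n : A' := h * m with hn
  have hx2 : x * x = x + n := by rw [← hm]; noncomm_ring
  have hco : x * n = n * x := by rw [← hm]; noncomm_ring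
  have hn2 : n * n = 0 := hI m m
  set e : A' := x + n - 2 * (n * x) with he_def
  have he : e * e = e := lift_idem hco hn2 hx2
  have hπn0 : π n = 0 := by rw [hn, _root_.map_mul, hπh, zero_mul]
  have hπe : π e = E i0 i0 := by
    rw [he_def]; simp [_root_.map_mul, hπn0, hx]
  -- lift row and column
  choose xl hxl using fun i => hsurj (E i i0)
  choose yl hyl using fun i => hsurj (E i0 i)
  set u : Fin r → A' := fun i => xl i * e with hu
  set v : Fin r → A' := fun i => e * yl i with hv
  have hπu : ∀ i, π (u i) = E i i0 := fun i => by
    rw [hu]; simp only [_root_.map_mul, hxl, hπe, hEmul]; simp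
  have hπv : ∀ i, π (v i) = E i0 i := fun i => by
    rw [hv]; simp only [_root_.map_mul, hyl, hπe, hEmul]; simp
  have hue : ∀ i, u i * e = u i := fun i => by rw [hu]; simp only [mul_assoc, he]
  have hev : ∀ i, e * v i = v i := fun i => by rw [hv]; rw [← mul_assoc, he]
  set c : Fin r → Fin r → A' := fun i j => v i * u j - if i = j then e else 0 with hcdef
  have hπc : ∀ i j, π (c i j) = 0 := by
    intro i j
    rw [hcdef]
    simp only [map_sub, _root_.map_mul, hπv, hπu, hEmul]
    by_cases hij : i = j <;> simp [hij, hπe]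
  have hvu0 : ∀ i j, v i * u j = (if i = j then e else 0) + c i j := by
    intro i j; exact eq_add_of_sub_eq' rfl
  choose cm hcm using fun i j => (hker _).1 (hπc i j)
  have hcc : ∀ i j k l, c i j * c k l = 0 := fun i j k l => by
    rw [hcm, hcm]; exact hI _ _
  have hce : ∀ i j, c i j * e = c i j := by
    intro i j
    show (v i * u j - (if i = j then e else 0)) * e = _
    rw [sub_mul, mul_assoc, hue]
    by_cases hij : i = j <;> simp [hij, he, hcdef]
  have hec : ∀ i j, e * c i j = c i j := by
    intro i j
    show e * (v i * u j - (if i = j then e else 0)) = _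
    rw [mul_sub, ← mul_assoc, hev]
    by_cases hij : i = j <;> simp [hij, he, hcdef]
  set w : Fin r → A' := fun i => v i - ∑ k, c i k * v k with hw
  have hπw : ∀ i, π (w i) = E i0 i := by
    intro i
    show π (v i - ∑ k, c i k * v k) = _
    rw [map_sub, map_sum]
    simp only [_root_.map_mul, hπc, zero_mul, Finset.sum_const_zero, sub_zero, hπv]
  have hew : ∀ i, e * w i = w i := by
    intro i
    show e * (v i - ∑ k, c i k * v k) = v i - ∑ k, c i k * v k
    rw [mul_sub, hev, Finset.mul_sum]
    congr 1
    exact Finset.sum_congr rfl fun k _ => by rw [← mul_assoc, hec]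
  have hwu : ∀ i j, w i * u j = if i = j then e else 0 := by
    intro i j
    show (v i - ∑ k, c i k * v k) * u j = _
    rw [sub_mul, Finset.sum_mul]
    have hterm0 : ∀ k, (c i k * v k) * u j = if k = j then c i k * e else 0 := by
      intro k
      rw [mul_assoc, hvu0 k j, mul_add, hcc, add_zero]
      by_cases hkj : k = j <;> simp [hkj]
    rw [Finset.sum_congr rfl fun k _ => hterm0 k, Finset.sum_ite_eq' Finset.univ j
      (fun k => c i k * e), if_pos (Finset.mem_univ j), hce, hvu0 i j, add_sub_cancel_right]
  -- the sum of u i * w i is 1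
  have hf : (∑ i, u i * w i) = 1 := by
    have hf2 : (∑ i, u i * w i) * (∑ i, u i * w i) = ∑ i, u i * w i := by
      rw [Finset.sum_mul_sum]
      have hterm : ∀ i j, (u i * w i) * (u j * w j) = if i = j then u j * w j else 0 := by
        intro i j
        calc (u i * w i) * (u j * w j) = u i * ((w i * u j) * w j) := by noncomm_ring
        _ = _ := by
          rw [hwu]
          by_cases hij : i = j
          · subst hij; simp [hew]
          · simp [hij]
      rw [Finset.sum_congr rfl fun i _ => Finset.sum_congr rfl fun j _ => hterm i j]
      exact Finset.sum_congr rfl fun i _ => by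
        rw [Finset.sum_ite_eq Finset.univ i (fun j => u j * w j), if_pos (Finset.mem_univ i)]
    have hπf : π (∑ i, u i * w i) = 1 := by
      rw [map_sum]
      have : ∀ i, π (u i * w i) = E i i := fun i => by
        rw [_root_.map_mul, hπu, hπw, hEmul, if_pos rfl]
      rw [Finset.sum_congr rfl fun i _ => this i]
      ext a b
      simp only [hE, Matrix.sum_apply, Matrix.single, Matrix.of_apply,
        Matrix.one_apply]
      by_cases hab : a = b
      · subst hab; simp
      · rw [if_neg hab, Finset.sum_eq_zero]
        intro i _
        rw [if_neg]
        rintro ⟨rfl, rfl⟩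
        exact hab rfl
    obtain ⟨q, hq⟩ := (hker ((∑ i, u i * w i) - 1)).1
      (by rw [map_sub, hπf, map_one, sub_self])
    have hfq : (∑ i, u i * w i) = 1 + h * q := by rw [← hq]; noncomm_ring
    have hq0 : h * q = 0 := by
      have h2 := hf2
      rw [hfq] at h2
      have expand : (1 + h * q) * (1 + h * q) = 1 + h * q + (h * q + (h * q) * (h * q)) := by
        noncomm_ring
      rw [expand, hI, add_zero] at h2
      exact add_eq_left.mp h2
    rw [hfq, hq0, add_zero]
  -- diagonal form of π on the corner
  have hdiag : ∀ z : A', e * z * e = z →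
      π z = Matrix.single i0 i0 (π z i0 i0) := by
    intro z hz
    have h1 : π z = E i0 i0 * π z * E i0 i0 := by
      rw [← hπe, ← _root_.map_mul, ← _root_.map_mul, hz]
    have key : ∀ a b, (E i0 i0 * π z * E i0 i0) a b
        = if i0 = a ∧ i0 = b then π z i0 i0 else 0 := by
      intro a b
      by_cases hb : b = i0
      · by_cases ha : a = i0
        · subst ha; subst hb; simp [hE]
        · subst hb; simp [hE, ha, Ne.symm ha]
      · simp [hE, hb, Ne.symm hb]
    ext a b
    conv_lhs => rw [h1]
    rw [key]
    simp [Matrix.single]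
  letI RZ' : Ring ↥(cornerSet e) := cornerRing e he
  have hval_mul : ∀ a b : ↥(cornerSet e), ((a * b : ↥(cornerSet e)) : A') = a.1 * b.1 :=
    fun a b => rfl
  have hπhmul : ∀ a : A', π (h * a) = 0 := fun a => (hker _).2 ⟨a, rfl⟩
  set h' : ↥(cornerSet e) := ⟨h * e, by
    show e * (h * e) * e = h * e
    rw [hmove e e, he, mul_assoc, he]⟩ with hh'
  set π₀ : ↥(cornerSet e) →+* Z :=
    { toFun := fun z => π z.1 i0 i0
      map_one' := by show π e i0 i0 = 1; rw [hπe, hE]; simp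
      map_mul' := by
        intro a b
        show π (a.1 * b.1) i0 i0 = π a.1 i0 i0 * π b.1 i0 i0
        rw [_root_.map_mul, hdiag a.1 a.2, hdiag b.1 b.2,
          Matrix.single_mul_single_same]
        simp
      map_zero' := by show π (0 : A') i0 i0 = 0; simp
      map_add' := by
        intro a b
        show π (a.1 + b.1) i0 i0 = π a.1 i0 i0 + π b.1 i0 i0
        rw [map_add]; rfl } with hπ₀
  -- common factorization step
  have hfac : ∀ (z : ↥(cornerSet e)) (y0 : A'), z.1 = h * y0 →
      ∃ y : ↥(cornerSet e), z = h' * y := by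
    intro z y0 hy0
    refine ⟨⟨e * y0 * e, corner_sandwich he y0⟩, Subtype.ext ?_⟩
    show z.1 = (h * e) * (e * y0 * e)
    calc z.1 = e * z.1 * e := z.2.symm
    _ = e * (h * y0) * e := by rw [hy0]
    _ = h * (e * y0 * e) := by rw [hmove e y0, mul_assoc]
    _ = (h * e) * (e * y0 * e) := by
      rw [mul_assoc h e (e * y0 * e), corner_mul_left he (corner_sandwich he y0)]
  refine ⟨↥(cornerSet e), RZ', h', π₀, ⟨?_, ?_, ?_, ?_⟩, ?_⟩
  · -- centrality of h'
    intro z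
    refine Subtype.ext ?_
    show (h * e) * z.1 = z.1 * (h * e)
    rw [mul_assoc, corner_mul_left he z.2, hmove z.1 e, corner_mul_right he z.2]
  · -- surjectivity of π₀
    intro z
    obtain ⟨a, ha⟩ := hsurj (Matrix.single i0 i0 z)
    refine ⟨⟨e * a * e, corner_sandwich he a⟩, ?_⟩
    show π (e * a * e) i0 i0 = z
    rw [_root_.map_mul, _root_.map_mul, hπe, ha, hE, Matrix.single_mul_single_same,
      Matrix.single_mul_single_same]
    simp
  · -- kernel of π₀
    intro z
    constructor
    · intro hz0
      have hz0' : π z.1 i0 i0 = 0 := hz0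
      have : π z.1 = 0 := by
        rw [hdiag z.1 z.2, hz0', Matrix.single_zero]
      obtain ⟨y0, hy0⟩ := (hker z.1).1 this
      exact hfac z y0 hy0
    · rintro ⟨y, rfl⟩
      show π ((h * e) * y.1) i0 i0 = 0
      rw [mul_assoc, hπhmul]
      simp
  · -- annihilator of h'
    intro z
    constructor
    · intro hz0
      have hz0' : (h * e) * z.1 = 0 := congrArg Subtype.val hz0
      have : h * z.1 = 0 := by
        rw [← corner_mul_left he z.2, ← mul_assoc]; exact hz0'
      obtain ⟨y0, hy0⟩ := (hann z.1).1 this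
      exact hfac z y0 hy0
    · rintro ⟨y, rfl⟩
      refine Subtype.ext ?_
      show (h * e) * ((h * e) * y.1) = (0 : A')
      rw [mul_assoc h e y.1, hI]
  -- the ring isomorphism
  set Φ : Matrix (Fin r) (Fin r) ↥(cornerSet e) → A' :=
    fun X => ∑ i, ∑ j, u i * (X i j).1 * w j with hΦ
  have hval_add : ∀ a b : ↥(cornerSet e), ((a + b : ↥(cornerSet e)) : A') = a.1 + b.1 :=
    fun _ _ => rfl
  have hval_zero : ((0 : ↥(cornerSet e)) : A') = 0 := rfl
  have hΦadd : ∀ X Y, Φ (X + Y) = Φ X + Φ Y := by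
    intro X Y
    show (∑ i, ∑ j, u i * ((X + Y) i j).1 * w j) = _
    rw [← Finset.sum_add_distrib]
    refine Finset.sum_congr rfl fun i _ => ?_
    rw [← Finset.sum_add_distrib]
    refine Finset.sum_congr rfl fun j _ => ?_
    rw [Matrix.add_apply, hval_add]
    noncomm_ring
  have hΦ0 : Φ 0 = 0 := by
    show (∑ i, ∑ j, u i * ((0 : Matrix (Fin r) (Fin r) ↥(cornerSet e)) i j).1 * w j) = 0
    simp only [Matrix.zero_apply, hval_zero, mul_zero, zero_mul, Finset.sum_const_zero]
  have hΦstd : ∀ (i j : Fin r) (a : ↥(cornerSet e)),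
      Φ (Matrix.single i j a) = u i * a.1 * w j := by
    intro i j a
    show (∑ k, ∑ l, u k * ((Matrix.single i j a) k l).1 * w l) = _
    have hterm : ∀ k l, u k * ((Matrix.single i j a) k l).1 * w l
        = if i = k ∧ j = l then u i * a.1 * w j else 0 := by
      intro k l
      by_cases hkl : i = k ∧ j = l
      · obtain ⟨rfl, rfl⟩ := hkl
        rw [Matrix.single_apply_same, if_pos ⟨rfl, rfl⟩]
      · rw [Matrix.single_apply_of_ne _ _ _ _ _ hkl, if_neg hkl, hval_zero,
          mul_zero, zero_mul]
    have h1 : ∀ k, (∑ l, if i = k ∧ j = l then u i * a.1 * w j else 0)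
        = if i = k then u i * a.1 * w j else 0 := by
      intro k
      by_cases hik : i = k
      · simp [hik]
      · simp [hik]
    rw [Finset.sum_congr rfl fun k _ =>
      (Finset.sum_congr rfl fun l _ => hterm k l).trans (h1 k)]
    simp
  have hterm2 : ∀ (i j k l : Fin r) (a b : A'), a * e = a → e * b = b →
      (u i * a * w j) * (u k * b * w l) = if j = k then u i * (a * b) * w l else 0 := by
    intro i j k l a b hae heb
    calc (u i * a * w j) * (u k * b * w l) = u i * a * ((w j * u k) * (b * w l)) := by
          noncomm_ring
    _ = _ := by
      rw [hwu]
      by_cases hjk : j = k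
      · rw [if_pos hjk, if_pos hjk, ← mul_assoc e b (w l), heb]
        noncomm_ring
      · rw [if_neg hjk, if_neg hjk, zero_mul, mul_zero]
  have hΦmul : ∀ X Y, Φ (X * Y) = Φ X * Φ Y := by
    intro X Y
    induction X using Matrix.induction_on' with
    | h_zero => rw [zero_mul, hΦ0, zero_mul]
    | h_add p q hp hq => rw [add_mul, hΦadd, hΦadd, hp, hq, add_mul]
    | h_std_basis i j a =>
      induction Y using Matrix.induction_on' with
      | h_zero => rw [mul_zero, hΦ0, mul_zero]
      | h_add p q hp hq => rw [mul_add, hΦadd, hΦadd, hp, hq, mul_add]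
      | h_std_basis k l b =>
        rw [hΦstd, hΦstd,
          hterm2 i j k l a.1 b.1 (corner_mul_right he a.2) (corner_mul_left he b.2)]
        by_cases hjk : j = k
        · subst hjk
          rw [Matrix.single_mul_single_same, hΦstd, if_pos rfl, hval_mul]
        · rw [Matrix.single_mul_single_of_ne (h := hjk), hΦ0, if_neg hjk]
  have hΨmem : ∀ (a : A') (i j : Fin r), e * (w i * a * u j) * e = w i * a * u j := by
    intro a i j
    calc e * (w i * a * u j) * e = (e * w i) * a * (u j * e) := by noncomm_ring
    _ = w i * a * u j := by rw [hew, hue]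
  set Ψ : A' → Matrix (Fin r) (Fin r) ↥(cornerSet e) :=
    fun a => Matrix.of fun i j => (⟨w i * a * u j, hΨmem a i j⟩ : ↥(cornerSet e)) with hΨ
  have hΨadd : ∀ a b : A', Ψ (a + b) = Ψ a + Ψ b := by
    intro a b
    ext i j
    show w i * (a + b) * u j = w i * a * u j + w i * b * u j
    noncomm_ring
  have hleft : ∀ X, Ψ (Φ X) = X := by
    intro X
    induction X using Matrix.induction_on' with
    | h_zero =>
      rw [hΦ0]
      ext i j
      show w i * 0 * u j = ((0 : Matrix (Fin r) (Fin r) ↥(cornerSet e)) i j).1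
      rw [Matrix.zero_apply, hval_zero, mul_zero, zero_mul]
    | h_add p q hp hq => rw [hΦadd, hΨadd, hp, hq]
    | h_std_basis i j a =>
      rw [hΦstd]
      ext k l
      show w k * (u i * a.1 * w j) * u l = ((Matrix.single i j a) k l).1
      rw [show w k * (u i * a.1 * w j) * u l = (w k * u i) * (a.1 * (w j * u l)) from by
        noncomm_ring, hwu, hwu]
      by_cases hki : k = i
      · subst hki
        by_cases hjl : j = l
        · subst hjl
          rw [if_pos rfl, if_pos rfl, Matrix.single_apply_same,
            ← mul_assoc]
          exact a.2
        · rw [if_pos rfl, if_neg hjl, mul_zero, mul_zero,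
            Matrix.single_apply_of_ne _ _ _ _ _ (fun hcon => hjl hcon.2),
            hval_zero]
      · rw [if_neg hki, zero_mul,
          Matrix.single_apply_of_ne _ _ _ _ _ (fun hcon => hki hcon.1.symm),
          hval_zero]
  have hright : ∀ a : A', Φ (Ψ a) = a := by
    intro a
    show (∑ i, ∑ j, u i * (w i * a * u j) * w j) = a
    have h1 : ∀ i, (∑ j, u i * (w i * a * u j) * w j) = (u i * w i) * a := by
      intro i
      have hterm5 : ∀ j, u i * (w i * a * u j) * w j = ((u i * w i) * a) * (u j * w j) :=
        fun j => by noncomm_ring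
      rw [Finset.sum_congr rfl fun j _ => hterm5 j, ← Finset.mul_sum, hf, mul_one]
    rw [Finset.sum_congr rfl fun i _ => h1 i, ← Finset.sum_mul, hf, one_mul]
  refine ⟨{ toFun := Φ
            invFun := Ψ
            left_inv := hleft
            right_inv := hright
            map_mul' := fun X Y => hΦmul X Y
            map_add' := fun X Y => hΦadd X Y }, ?_, ?_⟩
  · -- φ (h' • 1) = h
    show (∑ i, ∑ j,
      u i * ((h' • (1 : Matrix (Fin r) (Fin r) ↥(cornerSet e))) i j).1 * w j) = h
    have hent : ∀ i j : Fin r,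
        ((h' • (1 : Matrix (Fin r) (Fin r) ↥(cornerSet e))) i j).1
        = if i = j then h * e else 0 := by
      intro i j
      rw [Matrix.smul_apply, Matrix.one_apply]
      by_cases hij : i = j
      · rw [if_pos hij, if_pos hij]
        show ((h' * 1 : ↥(cornerSet e)) : A') = h * e
        rw [mul_one]
      · rw [if_neg hij, if_neg hij]
        show ((h' * 0 : ↥(cornerSet e)) : A') = 0
        rw [mul_zero, hval_zero]
    have hterm3 : ∀ i j : Fin r,
        u i * ((h' • (1 : Matrix (Fin r) (Fin r) ↥(cornerSet e))) i j).1 * w j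
        = if i = j then h * (u i * w i) else 0 := by
      intro i j
      rw [hent i j]
      by_cases hij : i = j
      · subst hij
        rw [if_pos rfl, if_pos rfl, hmove (u i) e, hue, mul_assoc]
      · rw [if_neg hij, if_neg hij, mul_zero, zero_mul]
    rw [Finset.sum_congr rfl fun i _ => Finset.sum_congr rfl fun j _ => hterm3 i j]
    rw [Finset.sum_congr rfl fun i _ => (Finset.sum_ite_eq Finset.univ i
      (fun _ => h * (u i * w i))).trans (if_pos (Finset.mem_univ i))]
    rw [← Finset.mul_sum, hf, mul_one]
  · -- compatibility with π
    intro X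
    show π (∑ i, ∑ j, u i * (X i j).1 * w j) = π₀.mapMatrix X
    rw [map_sum]
    rw [Finset.sum_congr rfl fun i (_ : i ∈ Finset.univ) => map_sum π _ Finset.univ]
    have hterm4 : ∀ i j, π (u i * (X i j).1 * w j)
        = Matrix.single i j (π (X i j).1 i0 i0) := by
      intro i j
      rw [_root_.map_mul, _root_.map_mul, hπu, hπw, hdiag (X i j).1 (X i j).2]
      simp only [hE]
      rw [Matrix.single_mul_single_same, Matrix.single_mul_single_same]
      simp [Matrix.single_apply_same]
    rw [Finset.sum_congr rfl fun i _ => Finset.sum_congr rfl fun j _ => hterm4 i j]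
    conv_rhs => rw [Matrix.matrix_eq_sum_single (π₀.mapMatrix X)]
    refine Finset.sum_congr rfl fun i _ => Finset.sum_congr rfl fun j _ => ?_
    congr 1
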